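/- Let G = ⟨s₁,…,s_r⟩ be the free group of rank r and G ↷ᵀ (X,B,μ) a G-system. Let α, β be finite-entropy partitions and suppose there exist n, m ∈ ℕ such that β^n refines α and α^m refines β^n. Then α^m is a splitting of β. -/

import Mathlib

open MeasureTheory Filter
open scoped ENNReal symmDiff

namespace Bowen

noncomputable section

/-- The free group of rank `r`. -/
abbrev FG (r : ℕ) := FreeGroup (Fin r)

/-- The generating set element corresponding to `(i, b)`: `sᵢ` if `b = true`,
`sᵢ⁻¹` if `b = false`. -/
def gen {r : ℕ} (s : Fin r × Bool) : FG r :=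
  cond s.2 (FreeGroup.of s.1) (FreeGroup.of s.1)⁻¹

/-- The symmetric generating set `S = {s₁^{±1},…,s_r^{±1}}`. -/
def Sset (r : ℕ) : Set (FG r) := Set.range (gen (r := r))

/-- The ball of radius `n` about the identity in the word metric of `(G,S)`. -/
def ball (r n : ℕ) : Set (FG r) := {g | FreeGroup.norm g ≤ n}

section Partitions

variable {X : Type*} [mX : MeasurableSpace X] {K L : Type*}

/-- Shannon entropy of the countable labeled partition `p` with respect to `μ`
(in `ℝ≥0∞`, so that `H(p) < ∞` is meaningful). -/
def Hpart (μ : Measure X) (p : X → K) : ℝ≥0∞ :=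
  ∑' k : K, ENNReal.ofReal (Real.negMulLog ((μ (p ⁻¹' {k})).toReal))

/-- The atom of the partition `p` containing `x`. -/
def atomOf (p : X → K) (x : X) : Set X := p ⁻¹' {p x}

/-- Conditional Shannon entropy of `p` given the sub-σ-algebra `m`:
`H(p|m) = ∫ -log( μ(A_x | m)(x) ) dμ(x)`. -/
def HpartC (μ : Measure X) (p : X → K) (m : MeasurableSpace X) : ℝ≥0∞ :=
  ∫⁻ x, ENNReal.ofReal
    (- Real.log ((μ[(atomOf p x).indicator (fun _ => (1:ℝ)) | m]) x)) ∂μ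

/-- Join of two labeled partitions. -/
def pjoin (p : X → K) (q : X → L) : X → K × L := fun x => (p x, q x)

/-- Pullback partition `T_g^{-1} p`. -/
def pull {r : ℕ} (T : FG r → X → X) (g : FG r) (p : X → K) : X → K :=
  fun x => p (T g x)

/-- The join `⋁_{q ∈ Q} T_q^{-1} p` over a set `Q ⊆ G`. -/
def powS {r : ℕ} (T : FG r → X → X) (p : X → K) (Q : Set (FG r)) : X → (Q → K) :=
  fun x q => p (T (q : FG r) x)

/-- The join `p^n = ⋁_{g ∈ B(e,n)} T_g^{-1} p`. -/
def pow {r : ℕ} (T : FG r → X → X) (p : X → K) (n : ℕ) : X → (ball r n → K) :=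
  powS T p (ball r n)

/-- The σ-algebra generated by the partition `p`. -/
def sAlg (p : X → K) : MeasurableSpace X := MeasurableSpace.comap p ⊤

/-- The smallest `G`-invariant σ-algebra containing the partition `p`. -/
def sAlgG {r : ℕ} (T : FG r → X → X) (p : X → K) : MeasurableSpace X :=
  ⨆ g : FG r, sAlg (pull T g p)

/-- The σ-algebra `⋁_{f ∈ Q} T_f^{-1} p` for a (possibly infinite) `Q ⊆ G`. -/
def sAlgSet {r : ℕ} (T : FG r → X → X) (p : X → K) (Q : Set (FG r)) :
    MeasurableSpace X :=
  ⨆ f ∈ Q, sAlg (pull T f p)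

/-- `F(T,α) = (1−2r)H(α) + ∑ᵢ H(α ∨ T_{sᵢ}^{-1}α)`. -/
def FF {r : ℕ} (T : FG r → X → X) (μ : Measure X) (p : X → K) : ℝ :=
  (1 - 2 * (r : ℝ)) * (Hpart μ p).toReal
    + ∑ i : Fin r, (Hpart μ (pjoin p (pull T (FreeGroup.of i) p))).toReal

/-- `f(T,α) = inf_{n>0} F(T,α^n)`, as an extended real. -/
def littleF {r : ℕ} (T : FG r → X → X) (μ : Measure X) (p : X → K) : EReal :=
  ⨅ n : ℕ, ((FF T μ (pow T p (n + 1)) : ℝ) : EReal)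

/-- Conditional version `F(T,α|𝓕) = (1−2r)H(α|𝓕) + ∑ᵢ H(α ∨ T_{sᵢ}^{-1}α|𝓕)`. -/
def FFc {r : ℕ} (T : FG r → X → X) (μ : Measure X) (m : MeasurableSpace X)
    (p : X → K) : ℝ :=
  (1 - 2 * (r : ℝ)) * (HpartC (mX := mX) μ p m).toReal
    + ∑ i : Fin r, (HpartC (mX := mX) μ (pjoin p (pull T (FreeGroup.of i) p)) m).toReal

/-- Conditional `f(T,α|𝓕) = inf_{n>0} F(T,α^n|𝓕)`. -/
def littleFc {r : ℕ} (T : FG r → X → X) (μ : Measure X) (m : MeasurableSpace X)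
    (p : X → K) : EReal :=
  ⨅ n : ℕ, ((FFc (mX := mX) T μ m (pow T p (n + 1)) : ℝ) : EReal)

/-- The mean entropy `h(T_s, α) = lim_n H(⋁_{i=0}^n T_s^{-i}α)/(n+1)`; since the
sequence is subadditive the limit equals the infimum, which we take as the
definition. -/
def hrate {r : ℕ} (T : FG r → X → X) (μ : Measure X) (s : FG r) (p : X → K) : ℝ :=
  ⨅ n : ℕ, (Hpart μ (fun x (i : Fin (n + 1)) => p (T (s ^ (i : ℕ)) x))).toReal / (n + 1)

/-- Conditional mean entropy `h(T_s, α|𝓕) = lim_n H(⋁_{i=0}^n T_s^{-i}α | 𝓕)/(n+1)`;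
for an invariant `𝓕` the sequence is subadditive so the limit equals the infimum. -/
def hrateC {r : ℕ} (T : FG r → X → X) (μ : Measure X) (m : MeasurableSpace X)
    (s : FG r) (p : X → K) : ℝ :=
  ⨅ n : ℕ, (HpartC (mX := mX) μ (fun x (i : Fin (n + 1)) => p (T (s ^ (i : ℕ)) x)) m).toReal / (n + 1)

/-- `F_*(T,α) = (1−r)H(α) + ∑ᵢ h(T_{sᵢ},α)`. -/
def Fstar {r : ℕ} (T : FG r → X → X) (μ : Measure X) (p : X → K) : ℝ :=
  (1 - (r : ℝ)) * (Hpart μ p).toReal + ∑ i : Fin r, hrate T μ (FreeGroup.of i) p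

/-- `f_*(T,α) = inf_{n>0} F_*(T,α^n)`. -/
def fstar {r : ℕ} (T : FG r → X → X) (μ : Measure X) (p : X → K) : EReal :=
  ⨅ n : ℕ, ((Fstar T μ (pow T p (n + 1)) : ℝ) : EReal)

/-- `F_*(T,α|𝓕) = (1−r)H(α|𝓕) + ∑ᵢ h(T_{sᵢ},α|𝓕)`. -/
def FstarC {r : ℕ} (T : FG r → X → X) (μ : Measure X) (m : MeasurableSpace X)
    (p : X → K) : ℝ :=
  (1 - (r : ℝ)) * (HpartC (mX := mX) μ p m).toReal + ∑ i : Fin r, hrateC (mX := mX) T μ m (FreeGroup.of i) p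

/-- `f_*(T,α|𝓕) = inf_{n>0} F_*(T,α^n|𝓕)`. -/
def fstarC {r : ℕ} (T : FG r → X → X) (μ : Measure X) (m : MeasurableSpace X)
    (p : X → K) : EReal :=
  ⨅ n : ℕ, ((FstarC (mX := mX) T μ m (pow T p (n + 1)) : ℝ) : EReal)

/-- `p` refines `q`: each atom of `p` is contained, up to a `μ`-null set,
in an atom of `q`. -/
def Refines (μ : Measure X) (p : X → K) (q : X → L) : Prop :=
  ∀ k : K, ∃ l : L, μ (p ⁻¹' {k} \ q ⁻¹' {l}) = 0

/-- Two labeled partitions are equal as partitions (up to null sets). -/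
def PartEquiv (μ : Measure X) (p : X → K) (q : X → L) : Prop :=
  Refines μ p q ∧ Refines μ q p

/-- `σ` is a simple splitting of `p`: `σ = p ∨ T_s^{-1}β` for some `s ∈ S` and
some coarsening `β` of `p`. -/
def SimpleSplit {r : ℕ} (μ : Measure X) (T : FG r → X → X) (p σ : X → ℕ) : Prop :=
  ∃ s ∈ Sset r, ∃ β : X → ℕ, Measurable β ∧ Refines μ p β ∧
    PartEquiv μ σ (pjoin p (pull T s β))

/-- `τ` is a splitting of `p`: obtained from `p` by a finite sequence of simple
splittings (as a partition, i.e. up to relabeling and null sets). -/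
def IsSplitting {r : ℕ} (μ : Measure X) (T : FG r → X → X) (p : X → ℕ)
    (τ : X → K) : Prop :=
  ∃ σ : X → ℕ, Relation.ReflTransGen (SimpleSplit μ T) p σ ∧ PartEquiv μ σ τ

/-- A partition is generating if the smallest `G`-invariant σ-algebra containing it
is the full σ-algebra up to `μ`-null sets. -/
def Generating {r : ℕ} (T : FG r → X → X) (μ : Measure X) (p : X → K) : Prop :=
  ∀ A : Set X, MeasurableSet A →
    ∃ A' : Set X, MeasurableSet[sAlgG T p] A' ∧ μ (A ∆ A') = 0

/-- The Rohlin distance `d(α,β) = H(α|β) + H(β|α)`. -/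
def rohlinDist (μ : Measure X) (p : X → K) (q : X → L) : ℝ :=
  (HpartC μ p (sAlg q)).toReal + (HpartC μ q (sAlg p)).toReal

end Partitions

/-- Adjacency in the left Cayley graph `Γ_L`: an edge joins `a` and `sa`, `s ∈ S`. -/
def adjL {r : ℕ} (a b : FG r) : Prop := ∃ s ∈ Sset r, b = s * a

/-- `Past(g₁;g₂)`: the set of `f ∈ G` such that every path in the left Cayley
graph from `f` to `g₁` passes through `g₂`. -/
def Past {r : ℕ} (g₁ g₂ : FG r) : Set (FG r) :=
  {f | ∀ l : List (FG r), l ≠ [] → l.head? = some f → l.getLast? = some g₁ →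
        l.Chain' adjL → g₂ ∈ l}

/-- A subset `F ⊆ G` is right-connected: the subgraph of the right Cayley graph
induced on `F` is connected. -/
def RightConnected {r : ℕ} (F : Set (FG r)) : Prop :=
  ∀ g ∈ F, ∀ h ∈ F,
    Relation.ReflTransGen (fun a b => a ∈ F ∧ b ∈ F ∧ ∃ s ∈ Sset r, b = a * s) g h

/-- A subset `F ⊆ G` is left-connected: the subgraph of the left Cayley graph
induced on `F` is connected. -/
def LeftConnected {r : ℕ} (F : Set (FG r)) : Prop :=
  ∀ g ∈ F, ∀ h ∈ F,
    Relation.ReflTransGen (fun a b => a ∈ F ∧ b ∈ F ∧ ∃ s ∈ Sset r, b = s * a) g h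

section Markov

variable {X : Type*} [MeasurableSpace X] {K : Type*}

/-- A `G`-process `(T,X,μ,α)` is Markov: for every `s ∈ S`, `g ∈ G` and every atom
`A` of `α`, `μ(T_{sg}^{-1}A | ⋁_{f∈Past(sg;g)} T_f^{-1}α) = μ(T_{sg}^{-1}A | T_g^{-1}α)`
almost everywhere. -/
def IsMarkov {r : ℕ} (μ : Measure X) (T : FG r → X → X) (p : X → K) : Prop :=
  ∀ s ∈ Sset r, ∀ g : FG r, ∀ k : K,
    (μ[((pull T (s * g) p) ⁻¹' {k}).indicator (fun _ => (1:ℝ)) |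
        sAlgSet T p (Past (s * g) g)])
      =ᵐ[μ]
    (μ[((pull T (s * g) p) ⁻¹' {k}).indicator (fun _ => (1:ℝ)) |
        sAlg (pull T g p)])

end Markov


section ExtraDefs

/-- The distance `d₁` between two ordered processes:
`∑_{s∈S} ∑_{i,j} |μ(A_i ∩ T_s^{-1}A_j) − ν(B_i ∩ U_s^{-1}B_j)|`. -/
def d1 {X Y : Type*} [MeasurableSpace X] [MeasurableSpace Y] {r : ℕ}
    (T : FG r → X → X) (μ : Measure X) (α : X → ℕ)
    (U : FG r → Y → Y) (ν : Measure Y) (β : Y → ℕ) : ℝ :=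
  ∑ i : Fin r, ∑ b : Bool,
    ∑' ij : ℕ × ℕ,
      |(μ (α ⁻¹' {ij.1} ∩ pull T (gen (i, b)) α ⁻¹' {ij.2})).toReal -
        (ν (β ⁻¹' {ij.1} ∩ pull U (gen (i, b)) β ⁻¹' {ij.2})).toReal|

/-- Isomorphism of ordered processes: a measure conjugacy between conull sets
intertwining the actions and carrying the `i`-th atom to the `i`-th atom. -/
def OrderedIso {X Y : Type*} [MeasurableSpace X] [MeasurableSpace Y] {r : ℕ}
    (T : FG r → X → X) (μ : Measure X) (α : X → ℕ)
    (U : FG r → Y → Y) (ν : Measure Y) (β : Y → ℕ) : Prop :=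
  ∃ (X' : Set X) (Y' : Set Y) (φ : X → Y) (ψ : Y → X),
    MeasurableSet X' ∧ MeasurableSet Y' ∧ μ X'ᶜ = 0 ∧ ν Y'ᶜ = 0 ∧
    Measurable φ ∧ Measurable ψ ∧ Set.MapsTo φ X' Y' ∧ Set.MapsTo ψ Y' X' ∧
    (∀ x ∈ X', ψ (φ x) = x) ∧ (∀ y ∈ Y', φ (ψ y) = y) ∧
    Measure.map φ μ = ν ∧
    (∀ (g : FG r), ∀ x ∈ X', φ (T g x) = U g (φ x)) ∧
    (∀ x ∈ X', β (φ x) = α x)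

/-- A transition system for `(G,S)`: a family of `K × K` matrices indexed by the
generating set together with a row vector, written as functions. -/
structure TransSys (r : ℕ) (K : Type*) where
  P : Fin r × Bool → K → K → ℝ
  pi : K → ℝ

/-- The transition system is an invariant transition system: the `P^s` are
stochastic matrices, `π` is a probability vector which is a steady state vector
for every `P^s`, and `π_i P^{s^{-1}}_{ij} = π_j P^s_{ji}`. -/
def TransSys.IsInvariant {r : ℕ} {K : Type*} (ts : TransSys r K) : Prop :=
  (∀ s i j, 0 ≤ ts.P s i j) ∧ (∀ s i, HasSum (ts.P s i) 1) ∧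
    (∀ i, 0 ≤ ts.pi i) ∧ HasSum ts.pi 1 ∧
    (∀ s j, HasSum (fun i => ts.pi i * ts.P s i j) (ts.pi j)) ∧
    (∀ s i j, ts.pi i * ts.P (s.1, !s.2) i j = ts.pi j * ts.P s j i)

/-- The canonical (shift) action of `G` on `K^G`: `(T_g x)(f) = x(fg)`. -/
def shiftT {r : ℕ} {K : Type*} : FG r → (FG r → K) → (FG r → K) :=
  fun g x f => x (f * g)

/-- `μ` is (a measure) induced by the transition system `ts`: the time-`e`
distribution is `π` and the transition probabilities into the complement of the
past are given by the matrices `P^s`.  (Note `T_g^{-1}A_k = {x : x(g) = k}`;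
the conditional equalities `μ(A|B) = c` are recorded in the equivalent product
form `μ(A ∩ B) = c·μ(B)`.) -/
def IsInducedBy {r : ℕ} {K : Type*} [MeasurableSpace K]
    (μ : Measure (FG r → K)) (ts : TransSys r K) : Prop :=
  (∀ k : K, μ {x | x 1 = k} = ENNReal.ofReal (ts.pi k)) ∧
  ∀ (s : Fin r × Bool) (g : FG r),
    FreeGroup.norm (gen s * g) = FreeGroup.norm g + 1 →
    ∀ (n : ℕ) (fs : Fin n → FG r) (ks : Fin n → K) (k₀ k : K),
      (∀ i, fs i ∈ Past (gen s * g) g ∧ fs i ≠ g) →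
      (μ ({x | x (gen s * g) = k} ∩ ({x | x g = k₀} ∩ ⋂ i, {x | x (fs i) = ks i}))
          = ENNReal.ofReal (ts.P s k₀ k) * μ ({x | x g = k₀} ∩ ⋂ i, {x | x (fs i) = ks i})) ∧
      μ ({x | x (gen s * g) = k} ∩ {x | x g = k₀})
          = ENNReal.ofReal (ts.P s k₀ k) * μ {x | x g = k₀}

end ExtraDefs

/-! ### Auxiliary machinery for the proof of `stmt_4` -/

section Aux

variable {X : Type*} [MeasurableSpace X]

lemma refines_refl {K : Type*} (μ : Measure X) (p : X → K) : Refines μ p p :=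
  fun k => ⟨k, by simp⟩

lemma refines_of_pointwise_refines {K L M : Type*} [Nonempty M] (μ : Measure X)
    {p : X → K} {q : X → L} {t : X → M}
    (hpq : ∀ x y, p x = p y → q x = q y) (hqt : Refines μ q t) :
    Refines μ p t := by
  intro k
  by_cases hx : ∃ x, p x = k
  · obtain ⟨x, hxk⟩ := hx
    obtain ⟨l, hl⟩ := hqt (q x)
    refine ⟨l, measure_mono_null (fun y hy => ?_) hl⟩
    obtain ⟨hy1, hy2⟩ := hy
    have hpy : p y = p x := by
      simp only [Set.mem_preimage, Set.mem_singleton_iff] at hy1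
      rw [hy1, hxk]
    refine ⟨?_, hy2⟩
    simp only [Set.mem_preimage, Set.mem_singleton_iff]
    exact hpq y x hpy
  · refine ⟨Classical.arbitrary M, ?_⟩
    have hemp : p ⁻¹' {k} = ∅ := by
      ext y
      simp only [Set.mem_preimage, Set.mem_singleton_iff, Set.mem_empty_iff_false, iff_false]
      exact fun h => hx ⟨y, h⟩
    simp [hemp]

lemma refines_of_pointwise {K M : Type*} [Nonempty M] (μ : Measure X)
    {p : X → K} {t : X → M} (h : ∀ x y, p x = p y → t x = t y) :
    Refines μ p t :=
  refines_of_pointwise_refines μ h (refines_refl μ t)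

lemma partEquiv_of_pointwise {K L : Type*} [Nonempty K] [Nonempty L] (μ : Measure X)
    {p : X → K} {q : X → L} (h : ∀ x y, p x = p y ↔ q x = q y) : PartEquiv μ p q :=
  ⟨refines_of_pointwise μ (fun x y hxy => (h x y).1 hxy),
   refines_of_pointwise μ (fun x y hxy => (h x y).2 hxy)⟩

/-- The list of the `2r` generators and their inverses. -/
def genL (r : ℕ) : List (FG r) :=
  (List.finRange r).flatMap fun i => [gen (i, true), gen (i, false)]

lemma mem_Sset_of_mem_genL {r : ℕ} {s : FG r} (hs : s ∈ genL r) : s ∈ Sset r := by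
  simp only [genL, List.mem_flatMap, List.mem_cons, List.not_mem_nil, or_false] at hs
  obtain ⟨i, -, h | h⟩ := hs
  · exact ⟨(i, true), h.symm⟩
  · exact ⟨(i, false), h.symm⟩

lemma gen_mem_genL {r : ℕ} (a : Fin r × Bool) : gen a ∈ genL r := by
  obtain ⟨i, b⟩ := a
  simp only [genL, List.mem_flatMap]
  refine ⟨i, List.mem_finRange i, ?_⟩
  cases b <;> simp

lemma norm_gen {r : ℕ} (a : Fin r × Bool) : FreeGroup.norm (gen a) = 1 := by
  obtain ⟨i, b⟩ := a
  cases b <;> simp [gen]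

/-- The ball of radius `k`, as a list, built level by level. -/
def ballL (r : ℕ) : ℕ → List (FG r)
  | 0 => [1]
  | k + 1 => ballL r k ++ (ballL r k).flatMap fun h => (genL r).map fun s => h * s

/-- The tail of `ballL`. -/
def tailL (r : ℕ) : ℕ → List (FG r)
  | 0 => []
  | k + 1 => tailL r k ++ (ballL r k).flatMap fun h => (genL r).map fun s => h * s

lemma ballL_eq_cons (r k : ℕ) : ballL r k = 1 :: tailL r k := by
  induction k with
  | zero => rfl
  | succ k ih => simp [ballL, tailL, ih]

lemma norm_le_of_mem_ballL {r k : ℕ} {g : FG r} (hg : g ∈ ballL r k) :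
    FreeGroup.norm g ≤ k := by
  induction k generalizing g with
  | zero =>
    simp only [ballL, List.mem_singleton] at hg
    simp [hg]
  | succ k ih =>
    simp only [ballL, List.mem_append, List.mem_flatMap, List.mem_map] at hg
    rcases hg with hg | ⟨h, hh, s, hs, rfl⟩
    · exact (ih hg).trans (Nat.le_succ k)
    · obtain ⟨a, rfl⟩ : ∃ a, s = gen a := by
        simp only [genL, List.mem_flatMap, List.mem_cons, List.not_mem_nil, or_false] at hs
        obtain ⟨i, -, h' | h'⟩ := hs
        exacts [⟨(i, true), h'⟩, ⟨(i, false), h'⟩]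
      calc FreeGroup.norm (h * gen a) ≤ FreeGroup.norm h + FreeGroup.norm (gen a) :=
            FreeGroup.norm_mul_le h (gen a)
        _ ≤ k + 1 := by rw [norm_gen]; exact Nat.add_le_add_right (ih hh) 1

lemma exists_decomp {r : ℕ} {g : FG r} (hg : g ≠ 1) :
    ∃ (h : FG r) (a : Fin r × Bool),
      FreeGroup.norm h < FreeGroup.norm g ∧ g = h * gen a := by
  have hw : g.toWord ≠ [] := fun h => hg (FreeGroup.toWord_eq_nil_iff.mp h)
  obtain ⟨a, ha⟩ : ∃ a, g.toWord = g.toWord.dropLast ++ [a] :=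
    ⟨g.toWord.getLast hw, (List.dropLast_append_getLast hw).symm⟩
  refine ⟨FreeGroup.mk g.toWord.dropLast, a, ?_, ?_⟩
  · have h1 : FreeGroup.norm (FreeGroup.mk g.toWord.dropLast) ≤ g.toWord.dropLast.length :=
      FreeGroup.norm_mk_le
    have h2 : g.toWord.dropLast.length < g.toWord.length := by
      rw [List.length_dropLast]
      have := List.length_pos_iff.mpr hw
      omega
    have h3 : FreeGroup.norm g = g.toWord.length := rfl
    omega
  · have hmk : FreeGroup.mk [a] = gen a := by
      obtain ⟨i, b⟩ := a
      cases b
      · show FreeGroup.mk [(i, false)] = (FreeGroup.of i)⁻¹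
        rw [show (FreeGroup.of i : FG r) = FreeGroup.mk [(i, true)] from rfl, FreeGroup.inv_mk]
        simp [FreeGroup.invRev]
      · rfl
    conv_lhs => rw [← FreeGroup.mk_toWord (x := g), ha]
    rw [← FreeGroup.mul_mk, hmk]

lemma mem_ballL_of_norm_le {r k : ℕ} {g : FG r} (hg : FreeGroup.norm g ≤ k) :
    g ∈ ballL r k := by
  induction k generalizing g with
  | zero =>
    have : g = 1 := FreeGroup.norm_eq_zero.mp (Nat.le_zero.mp hg)
    simp [ballL, this]
  | succ k ih =>
    by_cases h : FreeGroup.norm g ≤ k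
    · exact List.mem_append_left _ (ih h)
    · have hg1 : g ≠ 1 := by
        intro h1
        rw [h1, FreeGroup.norm_one] at h
        exact h (Nat.zero_le k)
      obtain ⟨h', a, hlt, rfl⟩ := exists_decomp hg1
      refine List.mem_append_right _ ?_
      simp only [List.mem_flatMap, List.mem_map]
      exact ⟨h', ih (by omega), gen a, gen_mem_genL a, rfl⟩

variable {r : ℕ}

/-- The tagged pulled partition: `(g, true)` is `T_g^{-1}β`, `(g, false)` is `T_g^{-1}α`. -/
def valP (T : FG r → X → X) (β α : X → ℕ) (e : FG r × Bool) : X → ℕ :=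
  pull T e.1 (cond e.2 β α)

/-- The `ℕ`-labeled join of the tagged pulled partitions listed in `L`. -/
def sigP (T : FG r → X → X) (β α : X → ℕ) (L : List (FG r × Bool)) : X → ℕ :=
  fun x => Encodable.encode (L.map fun e => valP T β α e x)

lemma sigP_eq_iff (T : FG r → X → X) (β α : X → ℕ) (L : List (FG r × Bool)) (x y : X) :
    sigP T β α L x = sigP T β α L y ↔ ∀ e ∈ L, valP T β α e x = valP T β α e y := by
  unfold sigP
  rw [Encodable.encode_injective.eq_iff]
  exact List.map_inj_left

lemma sigP_append_iff (T : FG r → X → X) (β α : X → ℕ) (L : List (FG r × Bool))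
    (e : FG r × Bool) (x y : X) :
    sigP T β α (L ++ [e]) x = sigP T β α (L ++ [e]) y ↔
      (sigP T β α L x = sigP T β α L y ∧ valP T β α e x = valP T β α e y) := by
  rw [sigP_eq_iff, sigP_eq_iff]
  constructor
  · intro h
    exact ⟨fun e' he' => h e' (List.mem_append_left _ he'),
      h e (List.mem_append_right _ (List.mem_singleton_self e))⟩
  · rintro ⟨hL, he⟩ e' he'
    rcases List.mem_append.mp he' with h | h
    · exact hL e' h
    · rw [List.mem_singleton.mp h]
      exact he

/-- The condition allowing to split off the tagged partition `e` from `sigP L0`. -/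
def CondP (μ : Measure X) (T : FG r → X → X) (β α : X → ℕ)
    (L0 : List (FG r × Bool)) (e : FG r × Bool) : Prop :=
  ∃ γ : X → ℕ, Measurable γ ∧ Refines μ (sigP T β α L0) γ ∧
    ∃ s ∈ Sset r, valP T β α e = pull T s γ

lemma condP_mono {μ : Measure X} {T : FG r → X → X} {β α : X → ℕ}
    {L0 : List (FG r × Bool)} {e : FG r × Bool}
    (h : CondP μ T β α L0 e) (L1 : List (FG r × Bool)) :
    CondP μ T β α (L0 ++ L1) e := by
  obtain ⟨γ, hm, hrf, s, hs, hv⟩ := h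
  refine ⟨γ, hm, refines_of_pointwise_refines μ (fun x y hxy => ?_) hrf, s, hs, hv⟩
  rw [sigP_eq_iff] at hxy ⊢
  exact fun e' he' => hxy e' (List.mem_append_left _ he')

lemma simpleSplit_step {μ : Measure X} {T : FG r → X → X} {β α : X → ℕ}
    {L : List (FG r × Bool)} {e : FG r × Bool} (h : CondP μ T β α L e) :
    SimpleSplit μ T (sigP T β α L) (sigP T β α (L ++ [e])) := by
  obtain ⟨γ, hm, hrf, s, hs, hv⟩ := h
  refine ⟨s, hs, γ, hm, hrf, partEquiv_of_pointwise μ fun x y => ?_⟩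
  rw [sigP_append_iff, hv]
  simp [pjoin, Prod.ext_iff]

lemma buildChain (μ : Measure X) (T : FG r → X → X) (β α p : X → ℕ) :
    ∀ (M L0 : List (FG r × Bool)),
      Relation.ReflTransGen (SimpleSplit μ T) p (sigP T β α L0) →
      (∀ e ∈ M, CondP μ T β α L0 e) →
      Relation.ReflTransGen (SimpleSplit μ T) p (sigP T β α (L0 ++ M))
  | [], L0, h0, _ => by simpa using h0
  | e :: M, L0, h0, hM => by
    have h1 : Relation.ReflTransGen (SimpleSplit μ T) p (sigP T β α (L0 ++ [e])) :=
      h0.tail (simpleSplit_step (hM e (List.mem_cons_self)))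
    have h2 := buildChain μ T β α p M (L0 ++ [e]) h1
      (fun e' he' => condP_mono (hM e' (List.mem_cons_of_mem _ he')) [e])
    simpa [List.append_assoc] using h2

lemma refines_sigP_component {μ : Measure X} {T : FG r → X → X} {β α : X → ℕ}
    {e : FG r × Bool} {L : List (FG r × Bool)} (he : e ∈ L) :
    Refines μ (sigP T β α L) (valP T β α e) :=
  refines_of_pointwise μ fun x y hxy => (sigP_eq_iff T β α L x y).1 hxy e he

end Aux

/-- if `β^n` refines `α` and `α^m` refines `β^n`, then `α^m`
is a splitting of `β`. -/
theorem stmt_4 {r : ℕ} (hr : 1 ≤ r) {X : Type*} [MeasurableSpace X] [StandardBorelSpace X]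
    (μ : Measure X) [IsProbabilityMeasure μ]
    (T : FG r → X → X) (hT1 : T 1 = id)
    (hTmul : ∀ g h : FG r, T (g * h) = T g ∘ T h)
    (hTmp : ∀ g : FG r, MeasurePreserving (T g) μ μ)
    (α β : X → ℕ) (hαm : Measurable α) (hβm : Measurable β)
    (hHα : Hpart μ α < ⊤) (hHβ : Hpart μ β < ⊤)
    (n m : ℕ)
    (h1 : Refines μ (pow T β n) α) (h2 : Refines μ (pow T α m) (pow T β n)) :
    IsSplitting μ T β (pow T α m) := by
  classical
  -- Abbreviations
  set Lβ : List (FG r × Bool) := (ballL r n).map (fun g => (g, true)) with hLβdef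
  set Lfull : List (FG r × Bool) := Lβ ++ (tailL r m).map (fun g => (g, false)) with hLfulldef
  -- pull composition
  have hpull : ∀ (p : X → ℕ) (h s : FG r), pull T s (pull T h p) = pull T (h * s) p := by
    intro p h s
    funext x
    show p (T h (T s x)) = p (T (h * s) x)
    rw [hTmul h s]
    rfl
  -- genL elements
  have hgenL : ∀ {s : FG r}, s ∈ genL r → s ∈ Sset r := fun hs => mem_Sset_of_mem_genL hs
  -- Membership facts about Lfull
  have hFβ : ∀ g : FG r, FreeGroup.norm g ≤ n → (g, true) ∈ Lfull := by
    intro g hg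
    exact List.mem_append_left _ (List.mem_map.mpr ⟨g, mem_ballL_of_norm_le hg, rfl⟩)
  have hFα : ∀ g : FG r, FreeGroup.norm g ≤ m → g ≠ 1 → (g, false) ∈ Lfull := by
    intro g hg hg1
    have hmem : g ∈ ballL r m := mem_ballL_of_norm_le hg
    rw [ballL_eq_cons] at hmem
    rcases List.mem_cons.mp hmem with h | h
    · exact absurd h hg1
    · exact List.mem_append_right _ (List.mem_map.mpr ⟨g, h, rfl⟩)
  -- sigP over a list containing all of ball n determines pow T β n
  have hsig_pow_β : ∀ L : List (FG r × Bool),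
      (∀ g : FG r, FreeGroup.norm g ≤ n → (g, true) ∈ L) →
      ∀ x y, sigP T β α L x = sigP T β α L y → pow T β n x = pow T β n y := by
    intro L hL x y hxy
    funext q
    exact (sigP_eq_iff T β α L x y).1 hxy ((q : FG r), true) (hL (q : FG r) q.2)
  -- Stage β: build β^n by simple splittings
  have stageβ : ∀ k, Relation.ReflTransGen (SimpleSplit μ T) β
      (sigP T β α ((ballL r k).map (fun g => (g, true)))) := by
    intro k
    induction k with
    | zero =>
      refine Relation.ReflTransGen.single ?_
      refine ⟨gen (⟨0, hr⟩, true), ⟨(⟨0, hr⟩, true), rfl⟩,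
        (fun _ => 0), measurable_const, fun k => ⟨0, by simp⟩, ?_⟩
      refine partEquiv_of_pointwise μ fun x y => ?_
      rw [sigP_eq_iff]
      simp [ballL, valP, pull, pjoin, hT1, Prod.ext_iff]
    | succ k ih =>
      have hb := buildChain μ T β α β
        (((ballL r k).flatMap fun h => (genL r).map fun s => h * s).map (fun g => (g, true)))
        ((ballL r k).map (fun g => (g, true))) ih ?_
      · have heq : (ballL r (k + 1)).map (fun g : FG r => (g, true)) =
            (ballL r k).map (fun g : FG r => (g, true)) ++
            ((ballL r k).flatMap fun h => (genL r).map fun s => h * s).map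
              (fun g : FG r => (g, true)) := by
          simp [ballL, List.map_append]
        rw [heq]
        exact hb
      · rintro e he
        simp only [List.mem_map, List.mem_flatMap] at he
        obtain ⟨g, ⟨h, hh, hg⟩, rfl⟩ := he
        obtain ⟨s, hs, rfl⟩ := hg
        refine ⟨pull T h β, hβm.comp (hTmp h).measurable,
          refines_sigP_component (List.mem_map.mpr ⟨h, hh, rfl⟩), s, hgenL hs, ?_⟩
        show pull T (h * s) β = pull T s (pull T h β)
        rw [hpull]
  -- β^n refines α, so once all of Lβ is present, α is a coarsening
  have hrefα : ∀ L0 : List (FG r × Bool),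
      (∀ g : FG r, FreeGroup.norm g ≤ n → (g, true) ∈ L0) →
      Refines μ (sigP T β α L0) α := fun L0 hL0 =>
    refines_of_pointwise_refines μ (hsig_pow_β L0 hL0) h1
  -- Stage α: add the α pulls level by level
  have stageα : ∀ j, Relation.ReflTransGen (SimpleSplit μ T) β
      (sigP T β α (Lβ ++ (tailL r j).map (fun g => (g, false)))) := by
    intro j
    induction j with
    | zero => simpa [tailL] using stageβ n
    | succ j ih =>
      have hb := buildChain μ T β α β
        (((ballL r j).flatMap fun h => (genL r).map fun s => h * s).map (fun g => (g, false)))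
        (Lβ ++ (tailL r j).map (fun g => (g, false))) ih ?_
      · have heq : Lβ ++ (tailL r (j + 1)).map (fun g : FG r => (g, false)) =
            (Lβ ++ (tailL r j).map (fun g : FG r => (g, false))) ++
            ((ballL r j).flatMap fun h => (genL r).map fun s => h * s).map
              (fun g : FG r => (g, false)) := by
          simp [tailL, List.map_append, List.append_assoc]
        rw [heq]
        exact hb
      · rintro e he
        simp only [List.mem_map, List.mem_flatMap] at he
        obtain ⟨g, ⟨h, hh, hg⟩, rfl⟩ := he
        obtain ⟨s, hs, rfl⟩ := hg
        by_cases h1' : h = 1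
        · subst h1'
          refine ⟨α, hαm, hrefα _ (fun g hg' =>
            List.mem_append_left _
              (List.mem_map.mpr ⟨g, mem_ballL_of_norm_le hg', rfl⟩)), s, hgenL hs, ?_⟩
          show pull T ((1 : FG r) * s) α = pull T s α
          rw [one_mul]
        · have hmem : h ∈ tailL r j := by
            have hb' := hh
            rw [ballL_eq_cons] at hb'
            rcases List.mem_cons.mp hb' with h' | h'
            · exact absurd h' h1'
            · exact h'
          refine ⟨pull T h α, hαm.comp (hTmp h).measurable,
            refines_sigP_component
              (List.mem_append_right _ (List.mem_map.mpr ⟨h, hmem, rfl⟩)), s, hgenL hs, ?_⟩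
          show pull T (h * s) α = pull T s (pull T h α)
          rw [hpull]
  -- Assemble
  refine ⟨sigP T β α Lfull, stageα m, ?_, ?_⟩
  · -- sigP Lfull refines pow T α m
    intro k
    by_cases hA : μ (sigP T β α Lfull ⁻¹' {k}) = 0
    · exact ⟨fun _ => 0, measure_mono_null Set.diff_subset hA⟩
    · obtain ⟨x₀, hx₀⟩ := MeasureTheory.nonempty_of_measure_ne_zero hA
      have hsub : sigP T β α Lfull ⁻¹' {k} ⊆ pow T β n ⁻¹' {pow T β n x₀} := by
        intro y hy
        have hxy : sigP T β α Lfull y = sigP T β α Lfull x₀ := by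
          simp only [Set.mem_preimage, Set.mem_singleton_iff] at hy hx₀
          rw [hy, hx₀]
        simp only [Set.mem_preimage, Set.mem_singleton_iff]
        exact hsig_pow_β Lfull hFβ y x₀ hxy
      obtain ⟨l₀, hl₀⟩ := h1 (pow T β n x₀)
      have hnull : μ (sigP T β α Lfull ⁻¹' {k} \ α ⁻¹' {l₀}) = 0 :=
        measure_mono_null (Set.diff_subset_diff_left hsub) hl₀
      have hne : (sigP T β α Lfull ⁻¹' {k} ∩ α ⁻¹' {l₀}).Nonempty := by
        by_contra hemp
        rw [Set.not_nonempty_iff_eq_empty] at hemp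
        refine hA (measure_mono_null (fun y hy => ?_) hnull)
        exact ⟨hy, fun hmem => Set.eq_empty_iff_forall_notMem.mp hemp y ⟨hy, hmem⟩⟩
      obtain ⟨x, hxA, hxα⟩ := hne
      refine ⟨fun q => α (T (q : FG r) x), measure_mono_null (fun y hy => ?_) hnull⟩
      obtain ⟨hyA, hyn⟩ := hy
      refine ⟨hyA, fun hyl => hyn ?_⟩
      simp only [Set.mem_preimage, Set.mem_singleton_iff]
      funext q
      show α (T (q : FG r) y) = α (T (q : FG r) x)
      by_cases hq : (q : FG r) = 1
      · rw [hq, hT1]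
        simp only [Set.mem_preimage, Set.mem_singleton_iff] at hyl hxα
        show α y = α x
        rw [hyl, hxα]
      · have hc : ((q : FG r), false) ∈ Lfull := hFα _ q.2 hq
        have hxy : sigP T β α Lfull y = sigP T β α Lfull x := by
          simp only [Set.mem_preimage, Set.mem_singleton_iff] at hyA hxA
          rw [hyA, hxA]
        exact (sigP_eq_iff T β α Lfull y x).1 hxy ((q : FG r), false) hc
  · -- pow T α m refines sigP Lfull
    intro k
    by_cases hA : μ (pow T α m ⁻¹' {k}) = 0
    · exact ⟨0, measure_mono_null Set.diff_subset hA⟩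
    · obtain ⟨lβ, hlβ⟩ := h2 k
      have hne : (pow T α m ⁻¹' {k} ∩ pow T β n ⁻¹' {lβ}).Nonempty := by
        by_contra hemp
        rw [Set.not_nonempty_iff_eq_empty] at hemp
        refine hA (measure_mono_null (fun y hy => ?_) hlβ)
        exact ⟨hy, fun hmem => Set.eq_empty_iff_forall_notMem.mp hemp y ⟨hy, hmem⟩⟩
      obtain ⟨x, hxA, hxβ⟩ := hne
      refine ⟨sigP T β α Lfull x, measure_mono_null (fun y hy => ?_) hlβ⟩
      obtain ⟨hyA, hyn⟩ := hy
      refine ⟨hyA, fun hyβ => hyn ?_⟩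
      simp only [Set.mem_preimage, Set.mem_singleton_iff] at hyA hxA hyβ hxβ ⊢
      refine (sigP_eq_iff T β α Lfull y x).2 fun e he => ?_
      rcases List.mem_append.mp he with hmem | hmem
      · obtain ⟨g, hg, rfl⟩ := List.mem_map.mp hmem
        have hgn : FreeGroup.norm g ≤ n := norm_le_of_mem_ballL hg
        show β (T g y) = β (T g x)
        have e1 := congrFun hyβ (⟨g, hgn⟩ : ball r n)
        have e2 := congrFun hxβ (⟨g, hgn⟩ : ball r n)
        exact e1.trans e2.symm
      · obtain ⟨g, hg, rfl⟩ := List.mem_map.mp hmem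
        have hgm : FreeGroup.norm g ≤ m := by
          refine norm_le_of_mem_ballL (r := r) (k := m) ?_
          rw [ballL_eq_cons]
          exact List.mem_cons_of_mem _ hg
        show α (T g y) = α (T g x)
        have e1 := congrFun hyA (⟨g, hgm⟩ : ball r m)
        have e2 := congrFun hxA (⟨g, hgm⟩ : ball r m)
        exact e1.trans e2.symm

end

end Bowen
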